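/- Let n ≥ 1 and let a₁,…,aₙ : ℝ → ℝ be continuous functions such that for every t ∈ ℝ the monic polynomial P(t)(x) = xⁿ - a₁(t)xⁿ⁻¹ + ⋯ + (-1)ⁿaₙ(t) has all roots real. For each t let x₁(t) ≤ x₂(t) ≤ ⋯ ≤ xₙ(t) denote the roots of P(t) listed in increasing order with multiplicity. Then each function xᵢ : ℝ → ℝ is continuous. -/

import Mathlib

open Polynomial

/-- The monic polynomial curve `P(t)(x) = xⁿ - a₁(t)xⁿ⁻¹ + a₂(t)xⁿ⁻² - ⋯ + (-1)ⁿ aₙ(t)`. -/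
noncomputable def curvePoly (n : ℕ) (a : ℕ → ℝ → ℝ) (t : ℝ) : Polynomial ℝ :=
  X ^ n + ∑ k ∈ Finset.Icc 1 n, C ((-1 : ℝ) ^ k * a k t) * X ^ (n - k)

/-- `x : T → ℝⁿ` parametrizes the roots of `P` on `T`: for each `t ∈ T` the multiset
`{x₁(t),…,xₙ(t)}` equals the multiset of roots of `P(t)` with multiplicity. -/
def IsRootParamOn (n : ℕ) (a : ℕ → ℝ → ℝ) (T : Set ℝ) (x : Fin n → ℝ → ℝ) : Prop :=
  ∀ t ∈ T, (curvePoly n a t).roots = Multiset.map (fun i => x i t) (Finset.univ : Finset (Fin n)).val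

lemma curvePoly_sum_deg_lt (n : ℕ) (hn : 1 ≤ n) (a : ℕ → ℝ → ℝ) (t : ℝ) :
    (∑ k ∈ Finset.Icc 1 n, C ((-1 : ℝ) ^ k * a k t) * X ^ (n - k)).degree < (n : WithBot ℕ) := by
  refine lt_of_le_of_lt (degree_sum_le _ _) ?_
  rw [Finset.sup_lt_iff (by exact_mod_cast WithBot.bot_lt_coe n)]
  intro k hk
  refine lt_of_le_of_lt (degree_C_mul_X_pow_le _ _) ?_
  exact_mod_cast Nat.sub_lt hn (Finset.mem_Icc.mp hk).1

lemma curvePoly_monic (n : ℕ) (hn : 1 ≤ n) (a : ℕ → ℝ → ℝ) (t : ℝ) :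
    (curvePoly n a t).Monic :=
  monic_X_pow_add (curvePoly_sum_deg_lt n hn a t)

lemma curvePoly_natDegree (n : ℕ) (hn : 1 ≤ n) (a : ℕ → ℝ → ℝ) (t : ℝ) :
    (curvePoly n a t).natDegree = n := by
  have h : (curvePoly n a t).degree = n := by
    rw [curvePoly, add_comm]
    rw [degree_add_eq_right_of_degree_lt]
    · exact degree_X_pow n
    · rw [degree_X_pow]; exact curvePoly_sum_deg_lt n hn a t
  exact natDegree_eq_of_degree_eq_some h

lemma curvePoly_eval (n : ℕ) (a : ℕ → ℝ → ℝ) (t z : ℝ) :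
    (curvePoly n a t).eval z
      = z ^ n + ∑ k ∈ Finset.Icc 1 n, (-1 : ℝ) ^ k * a k t * z ^ (n - k) := by
  simp [curvePoly, eval_finset_sum]

lemma curvePoly_eq_prod (n : ℕ) (hn : 1 ≤ n) (a : ℕ → ℝ → ℝ)
    (hreal : ∀ t : ℝ, ((curvePoly n a t).roots).card = n)
    (x : Fin n → ℝ → ℝ) (hx : IsRootParamOn n a Set.univ x) (t : ℝ) :
    curvePoly n a t = ∏ j : Fin n, (X - C (x j t)) := by
  have hf := prod_multiset_X_sub_C_of_monic_of_roots_card_eq (curvePoly_monic n hn a t)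
    (by rw [hreal t, curvePoly_natDegree n hn a t])
  rw [← hf, hx t (Set.mem_univ t), Multiset.map_map, Finset.prod_eq_multiset_prod]
  rfl

lemma curvePoly_eval_eq_prod (n : ℕ) (hn : 1 ≤ n) (a : ℕ → ℝ → ℝ)
    (hreal : ∀ t : ℝ, ((curvePoly n a t).roots).card = n)
    (x : Fin n → ℝ → ℝ) (hx : IsRootParamOn n a Set.univ x) (t z : ℝ) :
    (curvePoly n a t).eval z = ∏ j : Fin n, (z - x j t) := by
  rw [curvePoly_eq_prod n hn a hreal x hx t]
  simp [eval_prod]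

/-- Cauchy-type bound on the roots. -/
lemma curvePoly_root_bound (n : ℕ) (hn : 1 ≤ n) (a : ℕ → ℝ → ℝ) (t : ℝ) (r : ℝ)
    (hr : (curvePoly n a t).eval r = 0) :
    |r| ≤ 1 + ∑ k ∈ Finset.Icc 1 n, |a k t| := by
  by_contra hcon
  push_neg at hcon
  set S := ∑ k ∈ Finset.Icc 1 n, |a k t| with hS
  have hS0 : 0 ≤ S := Finset.sum_nonneg fun _ _ => abs_nonneg _
  have h1 : 1 ≤ |r| := by linarith
  rw [curvePoly_eval] at hr
  have habs : |r| ^ n = |∑ k ∈ Finset.Icc 1 n, (-1 : ℝ) ^ k * a k t * r ^ (n - k)| := by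
    have h2 : r ^ n = -(∑ k ∈ Finset.Icc 1 n, (-1 : ℝ) ^ k * a k t * r ^ (n - k)) := by
      linarith
    rw [← abs_pow, h2, abs_neg]
  have hle : |r| ^ n ≤ S * |r| ^ (n - 1) := by
    calc |r| ^ n = |∑ k ∈ Finset.Icc 1 n, (-1 : ℝ) ^ k * a k t * r ^ (n - k)| := habs
      _ ≤ ∑ k ∈ Finset.Icc 1 n, |(-1 : ℝ) ^ k * a k t * r ^ (n - k)| :=
          Finset.abs_sum_le_sum_abs _ _
      _ = ∑ k ∈ Finset.Icc 1 n, |a k t| * |r| ^ (n - k) := by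
          refine Finset.sum_congr rfl fun k _ => ?_
          rw [abs_mul, abs_mul, abs_pow, abs_pow, abs_neg, abs_one, one_pow, one_mul]
      _ ≤ ∑ k ∈ Finset.Icc 1 n, |a k t| * |r| ^ (n - 1) := by
          refine Finset.sum_le_sum fun k hk => ?_
          refine mul_le_mul_of_nonneg_left ?_ (abs_nonneg _)
          exact pow_le_pow_right₀ h1 (Nat.sub_le_sub_left (Finset.mem_Icc.mp hk).1 n)
      _ = S * |r| ^ (n - 1) := by rw [← Finset.sum_mul]
  have hpow : |r| ^ n = |r| * |r| ^ (n - 1) := by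
    rw [← pow_succ']
    congr 1
    omega
  have hpos : (0 : ℝ) < |r| ^ (n - 1) := pow_pos (by linarith) _
  nlinarith [mul_lt_mul_of_pos_right (show S < |r| by linarith) hpos]

lemma mono_eq_of_multiset_eq {n : ℕ} {f g : Fin n → ℝ} (hf : Monotone f) (hg : Monotone g)
    (h : Multiset.map f (Finset.univ : Finset (Fin n)).val
        = Multiset.map g (Finset.univ : Finset (Fin n)).val) : f = g := by
  rw [Fin.univ_val_map, Fin.univ_val_map, Multiset.coe_eq_coe] at h
  exact List.ofFn_injective (List.Perm.eq_of_sortedLE hf.sortedLE_ofFn hg.sortedLE_ofFn h)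

theorem ordered_roots_continuous
    (n : ℕ) (hn : 1 ≤ n) (a : ℕ → ℝ → ℝ)
    (hcont : ∀ k ∈ Finset.Icc 1 n, Continuous (a k))
    (hreal : ∀ t : ℝ, ((curvePoly n a t).roots).card = n)
    (x : Fin n → ℝ → ℝ)
    (hx : IsRootParamOn n a Set.univ x)
    (hmono : ∀ t : ℝ, ∀ i j : Fin n, i ≤ j → x i t ≤ x j t) :
    ∀ i, Continuous (x i) := by
  -- it suffices to prove continuity of the vector function
  set v : ℝ → (Fin n → ℝ) := fun t j => x j t with hv
  suffices hvc : Continuous v by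
    intro i
    exact (continuous_apply i).comp hvc
  -- roots evaluate to zero
  have hroot : ∀ (t : ℝ) (j : Fin n), (curvePoly n a t).eval (x j t) = 0 := by
    intro t j
    rw [curvePoly_eval_eq_prod n hn a hreal x hx]
    exact Finset.prod_eq_zero (Finset.mem_univ j) (by ring)
  -- bound function
  set B : ℝ → ℝ := fun t => 1 + ∑ k ∈ Finset.Icc 1 n, |a k t| with hB
  have hBcont : Continuous B :=
    continuous_const.add (continuous_finset_sum _ fun k hk => (hcont k hk).abs)
  have hBbd : ∀ (t : ℝ) (j : Fin n), |x j t| ≤ B t := fun t j =>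
    curvePoly_root_bound n hn a t _ (hroot t j)
  have hB0 : ∀ t, 0 ≤ B t := by
    intro t
    have : 0 ≤ ∑ k ∈ Finset.Icc 1 n, |a k t| := Finset.sum_nonneg fun _ _ => abs_nonneg _
    simp only [hB]; linarith
  -- continuity of eval of curvePoly in t
  have hevalc : ∀ z : ℝ, Continuous (fun t => (curvePoly n a t).eval z) := by
    intro z
    have : (fun t => (curvePoly n a t).eval z)
        = fun t => z ^ n + ∑ k ∈ Finset.Icc 1 n, (-1 : ℝ) ^ k * a k t * z ^ (n - k) := by
      funext t; exact curvePoly_eval n a t z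
    rw [this]
    exact continuous_const.add (continuous_finset_sum _ fun k hk =>
      (continuous_const.mul (hcont k hk)).mul continuous_const)
  rw [continuous_iff_seqContinuous]
  intro u t₀ hu
  apply Filter.tendsto_of_subseq_tendsto
  intro ns hns
  -- the sequence of root vectors is bounded
  have htns : Filter.Tendsto (fun m => u (ns m)) Filter.atTop (nhds t₀) := hu.comp hns
  obtain ⟨M, hM⟩ := (hBcont.continuousAt.tendsto.comp htns).bddAbove_range
  have hM0 : 0 ≤ M := le_trans (hB0 (u (ns 0))) (hM ⟨0, rfl⟩)
  have hmem : ∀ m, v (u (ns m)) ∈ Metric.closedBall (0 : Fin n → ℝ) M := by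
    intro m
    rw [Metric.mem_closedBall, dist_zero_right]
    rw [pi_norm_le_iff_of_nonneg hM0]
    intro j
    calc ‖v (u (ns m)) j‖ = |x j (u (ns m))| := rfl
      _ ≤ B (u (ns m)) := hBbd _ _
      _ ≤ M := hM ⟨m, rfl⟩
  obtain ⟨y, -, φ, hφ, hyt⟩ :=
    (isCompact_closedBall (0 : Fin n → ℝ) M).tendsto_subseq hmem
  refine ⟨φ, ?_⟩
  -- it remains to show y = v t₀
  have hycomp : ∀ j : Fin n, Filter.Tendsto (fun m => x j (u (ns (φ m)))) Filter.atTop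
      (nhds (y j)) := by
    intro j
    exact ((continuous_apply j).continuousAt.tendsto.comp hyt)
  -- y is monotone
  have hymono : Monotone y := by
    intro i j hij
    exact le_of_tendsto_of_tendsto' (hycomp i) (hycomp j)
      (fun m => hmono _ i j hij)
  -- ∏ (X - y j) = curvePoly t₀
  have hprod : ∀ z : ℝ, ∏ j : Fin n, (z - y j) = (curvePoly n a t₀).eval z := by
    intro z
    have h1 : Filter.Tendsto (fun m => ∏ j : Fin n, (z - x j (u (ns (φ m)))))
        Filter.atTop (nhds (∏ j : Fin n, (z - y j))) := by
      exact tendsto_finset_prod Finset.univ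
        (fun j _ => Filter.Tendsto.const_sub z (hycomp j))
    have h2 : Filter.Tendsto (fun m => (curvePoly n a (u (ns (φ m)))).eval z)
        Filter.atTop (nhds ((curvePoly n a t₀).eval z)) :=
      (hevalc z).continuousAt.tendsto.comp (htns.comp hφ.tendsto_atTop)
    have heq : (fun m => ∏ j : Fin n, (z - x j (u (ns (φ m)))))
        = fun m => (curvePoly n a (u (ns (φ m)))).eval z := by
      funext m
      exact (curvePoly_eval_eq_prod n hn a hreal x hx _ z).symm
    rw [heq] at h1
    exact tendsto_nhds_unique h1 h2
  -- hence the root multisets agree and y = v t₀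
  have hpoly : (∏ j : Fin n, (X - C (y j))) = ∏ j : Fin n, (X - C (x j t₀)) := by
    refine Polynomial.funext fun z => ?_
    rw [eval_prod, eval_prod]
    simp only [eval_sub, eval_X, eval_C]
    rw [hprod z, curvePoly_eval_eq_prod n hn a hreal x hx t₀ z]
  have hms : Multiset.map y (Finset.univ : Finset (Fin n)).val
      = Multiset.map (fun j => x j t₀) (Finset.univ : Finset (Fin n)).val := by
    have h1 := roots_multiset_prod_X_sub_C
      (Multiset.map y (Finset.univ : Finset (Fin n)).val)
    have h2 := roots_multiset_prod_X_sub_C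
      (Multiset.map (fun j => x j t₀) (Finset.univ : Finset (Fin n)).val)
    rw [← h1, ← h2]
    congr 1
    rw [Multiset.map_map, Multiset.map_map]
    calc ((Finset.univ : Finset (Fin n)).val.map fun j => X - C (y j)).prod
        = ∏ j : Fin n, (X - C (y j)) := rfl
      _ = ∏ j : Fin n, (X - C (x j t₀)) := hpoly
      _ = ((Finset.univ : Finset (Fin n)).val.map fun j => X - C (x j t₀)).prod := rfl
  have hyx : y = v t₀ :=
    mono_eq_of_multiset_eq hymono (fun i j hij => hmono t₀ i j hij) hms
  rw [← hyx]
  exact hyt
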